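/- For all ζ > 0, (1 - ζ²)·∫₀^ζ exp(-t²/2) dt < ζ·exp(-ζ²/2). -/

import Mathlib

open Set

theorem stmt2 (ζ : ℝ) (h0 : 0 < ζ) :
    (1 - ζ^2) * (∫ t in (0:ℝ)..ζ, Real.exp (-t^2/2)) < ζ * Real.exp (-ζ^2/2) := by
  set f : ℝ → ℝ := fun t => Real.exp (-t^2/2) with hf
  have hcont : Continuous f := by fun_prop
  have hG : ∀ x : ℝ, HasDerivAt (fun u => ∫ t in (0:ℝ)..u, f t) (f x) x := by
    intro x
    exact (hcont.integral_hasStrictDerivAt 0 x).hasDerivAt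
  set F : ℝ → ℝ := fun x => x * f x - (1 - x^2) * ∫ t in (0:ℝ)..x, f t with hFdef
  have hF' : ∀ x : ℝ, HasDerivAt F (2*x * ∫ t in (0:ℝ)..x, f t) x := by
    intro x
    have hexp : HasDerivAt f (-x * f x) x := by
      have hq : HasDerivAt (fun y : ℝ => -y^2/2) (-x) x := by
        have := ((hasDerivAt_pow 2 x).neg).div_const 2
        refine this.congr_deriv ?_
        ring
      have := hq.exp
      simpa [hf, mul_comm] using this
    have h1 : HasDerivAt (fun y : ℝ => y * f y) (f x + x * (-x * f x)) x := by
      exact ((hasDerivAt_id x).mul hexp).congr_deriv (by simp)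
    have h2 : HasDerivAt (fun y : ℝ => (1 - y^2) * ∫ t in (0:ℝ)..y, f t)
        ((-(2*x)) * (∫ t in (0:ℝ)..x, f t) + (1 - x^2) * f x) x := by
      have hp : HasDerivAt (fun y : ℝ => 1 - y^2) (-(2*x)) x := by
        have := (hasDerivAt_const x (1:ℝ)).sub (hasDerivAt_pow 2 x)
        refine this.congr_deriv ?_
        ring
      exact hp.mul (hG x)
    have := h1.sub h2
    refine this.congr_deriv ?_
    ring
  have hmono : StrictMonoOn F (Icc 0 ζ) := by
    apply strictMonoOn_of_deriv_pos (convex_Icc 0 ζ)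
    · exact Differentiable.continuous (fun x => (hF' x).differentiableAt) |>.continuousOn
    · intro x hx
      rw [interior_Icc] at hx
      rw [(hF' x).deriv]
      have hGpos : 0 < ∫ t in (0:ℝ)..x, f t := by
        apply intervalIntegral.intervalIntegral_pos_of_pos_on
        · exact (hcont.intervalIntegrable 0 x)
        · intro t _; positivity
        · exact hx.1
      exact mul_pos (by linarith [hx.1]) hGpos
  have key : F 0 < F ζ := hmono (by constructor <;> [rfl; exact le_of_lt h0])
    (by constructor <;> [exact le_of_lt h0; rfl]) h0
  have hF0 : F 0 = 0 := by simp [hFdef]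
  rw [hF0, hFdef] at key
  simp only at key
  linarith
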